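/- Assume p₁ ≥ p₂ > 0 and let c_S be a real number with p(z) = p₁z₁ + p₂z₂ + c_S > 0 on the closure of the triangle P. Let a = −Scal_Σ/2 for a real number Scal_Σ, let H = (D²u_FS)⁻¹ with entries H_{ij}, and for z in the interior P⁰ define A_{il}(z) = −p₁ ∂H_{1i}/∂z_l − p₂ ∂H_{2i}/∂z_l + (1/p(z))(p₁H_{1i} + p₂H_{2i}) p_l, and K(z) = (1/(4p(z)⁴)) (2a·p(z) + p₁²H_{11} + 2p₁p₂H_{12} + p₂²H_{22})² + (1/(4p(z)²)) Σ_{i,l=1}² A_{il}(z) A_{li}(z) + 4/3. Then for every z ∈ P⁰: K(z) ≤ (1/p(z)²) ( Scal_Σ² + 90 p₁⁴/p(z)² + (4p₁ + 24p₁²/p(z))² ) + 4/3. -/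

import Mathlib

open Real Set

noncomputable section

/-- The plane `ℝ²` with the Euclidean metric. -/
abbrev E2 : Type := EuclideanSpace ℝ (Fin 2)

/-- Partial derivative in the `i`-th coordinate direction. -/
def pder (i : Fin 2) (f : E2 → ℝ) : E2 → ℝ :=
  fun z => fderiv ℝ f z (EuclideanSpace.single i 1)

/-- The Hessian matrix `v_{ij}` of a function on `ℝ²`. -/
def Hess (v : E2 → ℝ) (z : E2) : Matrix (Fin 2) (Fin 2) ℝ :=
  Matrix.of fun i j => pder j (pder i v) z

/-- The inverse Hessian `v^{ij}`. -/
def invHess (v : E2 → ℝ) (z : E2) : Matrix (Fin 2) (Fin 2) ℝ :=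
  (Hess v z)⁻¹

/-- `v^{ij}_{kl} = ∂² v^{ij} / ∂z_k ∂z_l`. -/
def invHessD2 (v : E2 → ℝ) (i j k l : Fin 2) : E2 → ℝ :=
  pder l (pder k fun z => invHess v z i j)

/-- The interior `P⁰` of the triangle with vertices `(-1,-1)`, `(-1,2)`, `(2,-1)`. -/
def Tin : Set E2 := {z | 0 < 1 + z 0 ∧ 0 < 1 + z 1 ∧ 0 < 1 - z 0 - z 1}

/-- The closed triangle with vertices `(-1,-1)`, `(-1,2)`, `(2,-1)`. -/
def Tcl : Set E2 := {z | 0 ≤ 1 + z 0 ∧ 0 ≤ 1 + z 1 ∧ 0 ≤ 1 - z 0 - z 1}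

/-- The symplectic potential of the Fubini–Study metric on `ℂP²` in the class `c₁(O(3))`. -/
def uFS (z : E2) : ℝ :=
  (1 / 2) * ((1 + z 0) * Real.log (1 + z 0) + (1 + z 1) * Real.log (1 + z 1) +
    (1 - z 0 - z 1) * Real.log (1 - z 0 - z 1))

/-- The affine weight `p(z) = p₁ z₁ + p₂ z₂ + c_S`. -/
def pT (p₁ p₂ cS : ℝ) (z : E2) : ℝ := p₁ * z 0 + p₂ * z 1 + cS

/-- `A_{il}(z) = -p₁ ∂H_{1i}/∂z_l - p₂ ∂H_{2i}/∂z_l + (1/p(z))(p₁ H_{1i} + p₂ H_{2i}) p_l`,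
where `H = (D²u_FS)⁻¹`. -/
def Amat (p₁ p₂ cS : ℝ) (i l : Fin 2) (z : E2) : ℝ :=
  -p₁ * pder l (fun w => invHess uFS w 0 i) z - p₂ * pder l (fun w => invHess uFS w 1 i) z +
    (1 / pT p₁ p₂ cS z) * (p₁ * invHess uFS z 0 i + p₂ * invHess uFS z 1 i) * ![p₁, p₂] l

/-- `K(z)`: the squared norm of the bisectional curvature, over `z`, of the admissible metric
on `P(O ⊕ L₁ ⊕ L₂)` with Fubini–Study fiber potential, where `a = -Scal_Σ/2`. -/
def Kfun (p₁ p₂ cS a : ℝ) (z : E2) : ℝ :=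
  (1 / (4 * pT p₁ p₂ cS z ^ 4)) *
      (2 * a * pT p₁ p₂ cS z + p₁ ^ 2 * invHess uFS z 0 0 +
        2 * p₁ * p₂ * invHess uFS z 0 1 + p₂ ^ 2 * invHess uFS z 1 1) ^ 2 +
    (1 / (4 * pT p₁ p₂ cS z ^ 2)) *
      (∑ i, ∑ l, Amat p₁ p₂ cS i l z * Amat p₁ p₂ cS l i z) + 4 / 3

abbrev pr (i : Fin 2) : E2 →L[ℝ] ℝ := EuclideanSpace.proj (𝕜 := ℝ) i

lemma tin_open : IsOpen Tin := by
  have h0 : Continuous fun z : E2 => z 0 := (pr 0).continuous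
  have h1 : Continuous fun z : E2 => z 1 := (pr 1).continuous
  have : Tin = {z : E2 | 0 < 1 + z 0} ∩ ({z | 0 < 1 + z 1} ∩ {z | 0 < 1 - z 0 - z 1}) := by
    ext z; simp [Tin, and_assoc]
  rw [this]
  exact (isOpen_lt continuous_const (continuous_const.add h0)).inter
    ((isOpen_lt continuous_const (continuous_const.add h1)).inter
      (isOpen_lt continuous_const ((continuous_const.sub h0).sub h1)))

lemma proj_single (i j : Fin 2) :
    pr i (EuclideanSpace.single j (1:ℝ)) = if i = j then 1 else 0 := by
  rw [show pr i (EuclideanSpace.single j (1:ℝ)) = (EuclideanSpace.single j (1:ℝ)) i from rfl]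
  rw [EuclideanSpace.single_apply]

lemma hg0 (z : E2) : HasFDerivAt (fun w : E2 => 1 + w 0) (pr 0) z := by
  exact ((pr 0).hasFDerivAt (x := z)).const_add 1

lemma hg1 (z : E2) : HasFDerivAt (fun w : E2 => 1 + w 1) (pr 1) z := by
  exact ((pr 1).hasFDerivAt (x := z)).const_add 1

lemma hg2 (z : E2) : HasFDerivAt (fun w : E2 => 1 - w 0 - w 1) (-(pr 0) - pr 1) z := by
  exact (((pr 0).hasFDerivAt (x := z)).const_sub 1).sub ((pr 1).hasFDerivAt (x := z))

lemma uFS_hasFDerivAt {z : E2} (hz : z ∈ Tin) :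
    HasFDerivAt uFS
      ((1/2 : ℝ) • (((Real.log (1 + z 0) + 1) • pr 0 + (Real.log (1 + z 1) + 1) • pr 1)
        + (Real.log (1 - z 0 - z 1) + 1) • (-(pr 0) - pr 1))) z := by
  obtain ⟨h0, h1, h2⟩ := hz
  have t0 : HasFDerivAt (fun w : E2 => (1 + w 0) * Real.log (1 + w 0))
      ((Real.log (1 + z 0) + 1) • pr 0) z :=
    (Real.hasDerivAt_mul_log h0.ne').comp_hasFDerivAt (h₂ := fun t => t * Real.log t) z (hg0 z)
  have t1 : HasFDerivAt (fun w : E2 => (1 + w 1) * Real.log (1 + w 1))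
      ((Real.log (1 + z 1) + 1) • pr 1) z :=
    (Real.hasDerivAt_mul_log h1.ne').comp_hasFDerivAt (h₂ := fun t => t * Real.log t) z (hg1 z)
  have t2 : HasFDerivAt (fun w : E2 => (1 - w 0 - w 1) * Real.log (1 - w 0 - w 1))
      ((Real.log (1 - z 0 - z 1) + 1) • (-(pr 0) - pr 1)) z :=
    (Real.hasDerivAt_mul_log h2.ne').comp_hasFDerivAt (h₂ := fun t => t * Real.log t) z (hg2 z)
  exact ((t0.add t1).add t2).const_mul (1/2 : ℝ)

lemma pder_uFS (i : Fin 2) {z : E2} (hz : z ∈ Tin) :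
    pder i uFS z = (1/2) * (Real.log (1 + z i) - Real.log (1 - z 0 - z 1)) := by
  have h := (uFS_hasFDerivAt hz).fderiv
  unfold pder
  rw [h]
  fin_cases i <;>
    simp [ContinuousLinearMap.smul_apply, ContinuousLinearMap.add_apply,
      ContinuousLinearMap.sub_apply, ContinuousLinearMap.neg_apply, proj_single] <;> ring

lemma grad_hasFDerivAt (i : Fin 2) {z : E2} (hz : z ∈ Tin) :
    HasFDerivAt (fun w : E2 => (1/2) * (Real.log (1 + w i) - Real.log (1 - w 0 - w 1)))
      ((1/2 : ℝ) • ((1/(1 + z i)) • pr i - (1/(1 - z 0 - z 1)) • (-(pr 0) - pr 1))) z := by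
  obtain ⟨h0, h1, h2⟩ := hz
  have hi : 0 < 1 + z i := by fin_cases i <;> assumption
  have hgi : HasFDerivAt (fun w : E2 => 1 + w i) (pr i) z := by
    fin_cases i; exacts [hg0 z, hg1 z]
  have t1 : HasFDerivAt (fun w : E2 => Real.log (1 + w i)) ((1/(1 + z i)) • pr i) z := by
    have := (Real.hasDerivAt_log hi.ne').comp_hasFDerivAt z hgi
    rw [one_div]; exact this
  have t2 : HasFDerivAt (fun w : E2 => Real.log (1 - w 0 - w 1))
      ((1/(1 - z 0 - z 1)) • (-(pr 0) - pr 1)) z := by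
    have := (Real.hasDerivAt_log h2.ne').comp_hasFDerivAt z (hg2 z)
    rw [one_div]; exact this
  exact (t1.sub t2).const_mul (1/2 : ℝ)

lemma pder_pder_uFS (i l : Fin 2) {z : E2} (hz : z ∈ Tin) :
    pder l (pder i uFS) z =
      (1/2) * ((if l = i then 1/(1 + z i) else 0) + 1/(1 - z 0 - z 1)) := by
  have heq : pder i uFS =ᶠ[nhds z]
      fun w : E2 => (1/2) * (Real.log (1 + w i) - Real.log (1 - w 0 - w 1)) := by
    filter_upwards [tin_open.mem_nhds hz] with w hw using pder_uFS i hw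
  rw [show pder l (pder i uFS) z = fderiv ℝ (pder i uFS) z (EuclideanSpace.single l 1) from rfl]
  rw [heq.fderiv_eq, (grad_hasFDerivAt i hz).fderiv]
  fin_cases i <;> fin_cases l <;>
    simp [ContinuousLinearMap.smul_apply, ContinuousLinearMap.add_apply,
      ContinuousLinearMap.sub_apply, ContinuousLinearMap.neg_apply, proj_single] <;> ring

lemma hess_uFS {z : E2} (hz : z ∈ Tin) :
    Hess uFS z = Matrix.of ![![(1/2) * (1/(1 + z 0) + 1/(1 - z 0 - z 1)), (1/2) * (1/(1 - z 0 - z 1))],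
      ![(1/2) * (1/(1 - z 0 - z 1)), (1/2) * (1/(1 + z 1) + 1/(1 - z 0 - z 1))]] := by
  ext i j
  rw [show Hess uFS z i j = pder j (pder i uFS) z from rfl, pder_pder_uFS i j hz]
  fin_cases i <;> fin_cases j <;> simp <;> ring

lemma invHess_uFS {z : E2} (hz : z ∈ Tin) :
    invHess uFS z = Matrix.of
      ![![2*(1 + z 0) - (2/3)*(1 + z 0)^2, -(2/3)*(1 + z 0)*(1 + z 1)],
        ![-(2/3)*(1 + z 0)*(1 + z 1), 2*(1 + z 1) - (2/3)*(1 + z 1)^2]] := by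
  obtain ⟨h0, h1, h2⟩ := hz
  unfold invHess
  rw [hess_uFS ⟨h0, h1, h2⟩]
  apply Matrix.inv_eq_right_inv
  ext i j
  fin_cases i <;> fin_cases j <;>
    simp [Matrix.mul_apply, Fin.sum_univ_two] <;> field_simp <;> ring

lemma pder_poly_diag (k l : Fin 2) (z : E2) :
    pder l (fun w : E2 => 2*(1 + w k) - (2/3)*(1 + w k)^2) z =
      if l = k then 2 - (4/3)*(1 + z k) else 0 := by
  have hgk : HasFDerivAt (fun w : E2 => 1 + w k) (pr k) z := by
    fin_cases k; exacts [hg0 z, hg1 z]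
  have h : HasFDerivAt (fun w : E2 => 2*(1 + w k) - (2/3)*(1 + w k)^2)
      ((2 - (4/3)*(1 + z k)) • pr k) z := by
    have hd : HasDerivAt (fun t : ℝ => 2*t - (2/3)*t^2) (2 - (4/3)*(1 + z k)) (1 + z k) := by
      have := ((hasDerivAt_id (1 + z k)).const_mul 2).sub ((hasDerivAt_pow 2 (1 + z k)).const_mul (2/3))
      exact this.congr_deriv (by simp; ring)
    exact hd.comp_hasFDerivAt z hgk
  rw [show pder l (fun w : E2 => 2*(1 + w k) - (2/3)*(1 + w k)^2) z
      = fderiv ℝ (fun w : E2 => 2*(1 + w k) - (2/3)*(1 + w k)^2) z (EuclideanSpace.single l 1) from rfl,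
    h.fderiv]
  simp [proj_single, eq_comm]

lemma pder_poly_off (l : Fin 2) (z : E2) :
    pder l (fun w : E2 => -(2/3)*(1 + w 0)*(1 + w 1)) z =
      if l = 0 then -(2/3)*(1 + z 1) else -(2/3)*(1 + z 0) := by
  have h : HasFDerivAt (fun w : E2 => -(2/3)*(1 + w 0)*(1 + w 1))
      ((-(2/3)*(1 + z 1)) • pr 0 + (-(2/3)*(1 + z 0)) • pr 1) z := by
    have := ((hg0 z).mul (hg1 z)).const_mul (-(2/3) : ℝ)
    have h2 : (-(2/3) : ℝ) • ((1 + z 0) • pr 1 + (1 + z 1) • pr 0)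
        = (-(2/3)*(1 + z 1)) • pr 0 + (-(2/3)*(1 + z 0)) • pr 1 := by
      rw [smul_add, smul_smul, smul_smul]; ring_nf; abel
    rw [h2] at this
    exact this.congr_of_eventuallyEq (Filter.Eventually.of_forall fun w => by simp only [Pi.mul_apply]; ring)
  rw [show pder l (fun w : E2 => -(2/3)*(1 + w 0)*(1 + w 1)) z
      = fderiv ℝ (fun w : E2 => -(2/3)*(1 + w 0)*(1 + w 1)) z (EuclideanSpace.single l 1) from rfl,
    h.fderiv]
  fin_cases l <;> simp [ContinuousLinearMap.add_apply, ContinuousLinearMap.smul_apply, proj_single]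

lemma pder_invHess (i j l : Fin 2) {z : E2} (hz : z ∈ Tin) :
    pder l (fun w => invHess uFS w i j) z =
      ![![![2 - (4/3)*(1 + z 0), 0], ![-(2/3)*(1 + z 1), -(2/3)*(1 + z 0)]],
        ![![-(2/3)*(1 + z 1), -(2/3)*(1 + z 0)], ![0, 2 - (4/3)*(1 + z 1)]]] i j l := by
  have hmem := tin_open.mem_nhds hz
  fin_cases i <;> fin_cases j <;> simp only [Fin.zero_eta, Fin.mk_one]
  · have heq : (fun w => invHess uFS w 0 0) =ᶠ[nhds z]
        fun w : E2 => 2*(1 + w 0) - (2/3)*(1 + w 0)^2 := by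
      filter_upwards [hmem] with w hw; rw [invHess_uFS hw]; simp
    rw [show pder l (fun w => invHess uFS w 0 0) z
        = fderiv ℝ (fun w => invHess uFS w 0 0) z (EuclideanSpace.single l 1) from rfl,
      heq.fderiv_eq]
    rw [show fderiv ℝ (fun w : E2 => 2*(1 + w 0) - (2/3)*(1 + w 0)^2) z (EuclideanSpace.single l 1)
        = pder l (fun w : E2 => 2*(1 + w 0) - (2/3)*(1 + w 0)^2) z from rfl, pder_poly_diag 0 l z]
    fin_cases l <;> simp
  · have heq : (fun w => invHess uFS w 0 1) =ᶠ[nhds z]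
        fun w : E2 => -(2/3)*(1 + w 0)*(1 + w 1) := by
      filter_upwards [hmem] with w hw; rw [invHess_uFS hw]; simp
    rw [show pder l (fun w => invHess uFS w 0 1) z
        = fderiv ℝ (fun w => invHess uFS w 0 1) z (EuclideanSpace.single l 1) from rfl,
      heq.fderiv_eq]
    rw [show fderiv ℝ (fun w : E2 => -(2/3)*(1 + w 0)*(1 + w 1)) z (EuclideanSpace.single l 1)
        = pder l (fun w : E2 => -(2/3)*(1 + w 0)*(1 + w 1)) z from rfl, pder_poly_off l z]
    fin_cases l <;> simp
  · have heq : (fun w => invHess uFS w 1 0) =ᶠ[nhds z]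
        fun w : E2 => -(2/3)*(1 + w 0)*(1 + w 1) := by
      filter_upwards [hmem] with w hw; rw [invHess_uFS hw]; simp
    rw [show pder l (fun w => invHess uFS w 1 0) z
        = fderiv ℝ (fun w => invHess uFS w 1 0) z (EuclideanSpace.single l 1) from rfl,
      heq.fderiv_eq]
    rw [show fderiv ℝ (fun w : E2 => -(2/3)*(1 + w 0)*(1 + w 1)) z (EuclideanSpace.single l 1)
        = pder l (fun w : E2 => -(2/3)*(1 + w 0)*(1 + w 1)) z from rfl, pder_poly_off l z]
    fin_cases l <;> simp
  · have heq : (fun w => invHess uFS w 1 1) =ᶠ[nhds z]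
        fun w : E2 => 2*(1 + w 1) - (2/3)*(1 + w 1)^2 := by
      filter_upwards [hmem] with w hw; rw [invHess_uFS hw]; simp
    rw [show pder l (fun w => invHess uFS w 1 1) z
        = fderiv ℝ (fun w => invHess uFS w 1 1) z (EuclideanSpace.single l 1) from rfl,
      heq.fderiv_eq]
    rw [show fderiv ℝ (fun w : E2 => 2*(1 + w 1) - (2/3)*(1 + w 1)^2) z (EuclideanSpace.single l 1)
        = pder l (fun w : E2 => 2*(1 + w 1) - (2/3)*(1 + w 1)^2) z from rfl, pder_poly_diag 1 l z]
    fin_cases l <;> simp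
lemma bound_base00 (p₁ p₂ a b : ℝ) (hp₂ : 0 < p₂) (h12 : p₂ ≤ p₁)
    (ha : 0 < a) (hb : 0 < b) (hab : a + b < 3) :
    -(4*p₁) ≤ -p₁*(2 - (4/3)*a) + (2/3)*p₂*b ∧ -p₁*(2 - (4/3)*a) + (2/3)*p₂*b ≤ 4*p₁ := by
  have hp₁ : 0 < p₁ := lt_of_lt_of_le hp₂ h12
  constructor <;>
    nlinarith [mul_nonneg hp₁.le (by linarith : (0:ℝ) ≤ 3 - a), mul_nonneg hp₁.le ha.le,
      mul_nonneg hp₂.le (by linarith : (0:ℝ) ≤ 3 - b), mul_nonneg hp₂.le hb.le,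
      mul_nonneg (by linarith : (0:ℝ) ≤ p₁ - p₂) hb.le,
      mul_nonneg (by linarith : (0:ℝ) ≤ p₁ - p₂) (by linarith : (0:ℝ) ≤ 3 - b)]

lemma bound_G0 (p₁ p₂ a b : ℝ) (hp₂ : 0 < p₂) (h12 : p₂ ≤ p₁)
    (ha : 0 < a) (hb : 0 < b) (hab : a + b < 3) :
    -((3/2)*p₁) ≤ p₁*(2*a-(2/3)*a^2) + p₂*(-((2/3)*a*b)) ∧
      p₁*(2*a-(2/3)*a^2) + p₂*(-((2/3)*a*b)) ≤ (3/2)*p₁ := by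
  have hp₁ : 0 < p₁ := lt_of_lt_of_le hp₂ h12
  have hH00u : 2*a-(2/3)*a^2 ≤ 3/2 := by nlinarith [sq_nonneg (a - 3/2)]
  have hH00l : 0 ≤ 2*a-(2/3)*a^2 := by nlinarith [mul_nonneg ha.le (by linarith : (0:ℝ) ≤ 3 - a)]
  have habq : a*b ≤ 9/4 := by nlinarith [sq_nonneg (a - b), sq_nonneg (a + b)]
  constructor
  · nlinarith [mul_nonneg hp₁.le hH00l,
      mul_le_mul_of_nonneg_left habq hp₂.le,
      mul_le_mul_of_nonneg_right h12 (by norm_num : (0:ℝ) ≤ (3/2))]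
  · nlinarith [mul_le_mul_of_nonneg_left hH00u hp₁.le,
      mul_nonneg (mul_nonneg hp₂.le ha.le) hb.le]

lemma bound_G1 (p₁ p₂ a b : ℝ) (hp₂ : 0 < p₂) (h12 : p₂ ≤ p₁)
    (ha : 0 < a) (hb : 0 < b) (hab : a + b < 3) :
    -((3/2)*p₁) ≤ p₁*(-((2/3)*a*b)) + p₂*(2*b-(2/3)*b^2) ∧
      p₁*(-((2/3)*a*b)) + p₂*(2*b-(2/3)*b^2) ≤ (3/2)*p₁ := by
  have hp₁ : 0 < p₁ := lt_of_lt_of_le hp₂ h12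
  have hHu : 2*b-(2/3)*b^2 ≤ 3/2 := by nlinarith [sq_nonneg (b - 3/2)]
  have hHl : 0 ≤ 2*b-(2/3)*b^2 := by nlinarith [mul_nonneg hb.le (by linarith : (0:ℝ) ≤ 3 - b)]
  have habq : a*b ≤ 9/4 := by nlinarith [sq_nonneg (a - b), sq_nonneg (a + b)]
  constructor
  · nlinarith [mul_nonneg hp₂.le hHl, mul_le_mul_of_nonneg_left habq hp₁.le]
  · nlinarith [mul_le_mul_of_nonneg_left hHu hp₂.le,
      mul_nonneg (mul_nonneg hp₁.le ha.le) hb.le,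
      mul_le_mul_of_nonneg_right h12 (by norm_num : (0:ℝ) ≤ (3/2))]

set_option maxHeartbeats 1000000 in
lemma bound_Q (p₁ p₂ a b : ℝ) (hp₂ : 0 < p₂) (h12 : p₂ ≤ p₁)
    (ha : 0 < a) (hb : 0 < b) (hab : a + b < 3) :
    (p₁^2*(2*a-(2/3)*a^2) + 2*p₁*p₂*(-((2/3)*a*b)) + p₂^2*(2*b-(2/3)*b^2))^2 ≤ 9*p₁^4 := by
  have hp₁ : 0 < p₁ := lt_of_lt_of_le hp₂ h12
  have hH00u : 2*a-(2/3)*a^2 ≤ 3/2 := by nlinarith [sq_nonneg (a - 3/2)]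
  have hH00l : 0 ≤ 2*a-(2/3)*a^2 := by nlinarith [mul_nonneg ha.le (by linarith : (0:ℝ) ≤ 3 - a)]
  have hH11u : 2*b-(2/3)*b^2 ≤ 3/2 := by nlinarith [sq_nonneg (b - 3/2)]
  have hH11l : 0 ≤ 2*b-(2/3)*b^2 := by nlinarith [mul_nonneg hb.le (by linarith : (0:ℝ) ≤ 3 - b)]
  have habq : a*b ≤ 9/4 := by nlinarith [sq_nonneg (a - b), sq_nonneg (a + b)]
  have hsq : p₂^2 ≤ p₁^2 := by nlinarith
  have hQu : p₁^2*(2*a-(2/3)*a^2) + 2*p₁*p₂*(-((2/3)*a*b)) + p₂^2*(2*b-(2/3)*b^2) ≤ 3*p₁^2 := by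
    nlinarith [mul_le_mul_of_nonneg_left hH00u (sq_nonneg p₁),
      mul_le_mul_of_nonneg_left hH11u (sq_nonneg p₂),
      mul_nonneg (mul_nonneg (mul_nonneg hp₁.le hp₂.le) ha.le) hb.le]
  have hQl : -(3*p₁^2) ≤ p₁^2*(2*a-(2/3)*a^2) + 2*p₁*p₂*(-((2/3)*a*b)) + p₂^2*(2*b-(2/3)*b^2) := by
    nlinarith [mul_nonneg (sq_nonneg p₁) hH00l, mul_nonneg (sq_nonneg p₂) hH11l,
      mul_le_mul_of_nonneg_left habq (by positivity : (0:ℝ) ≤ (4/3)*(p₁*p₂)),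
      mul_le_mul_of_nonneg_left h12 hp₁.le]
  nlinarith [hQu, hQl]

lemma bound_A (p₁ q base g P : ℝ) (hp₁ : 0 < p₁) (hq : 0 ≤ q) (hqp : q ≤ p₁) (hP : 0 < P)
    (hbl : -(4*p₁) ≤ base) (hbu : base ≤ 4*p₁)
    (hgl : -((3/2)*p₁) ≤ g) (hgu : g ≤ (3/2)*p₁) :
    -(4*p₁ + (3/2)*p₁^2*(1/P)) ≤ base + (1/P)*g*q ∧
      base + (1/P)*g*q ≤ 4*p₁ + (3/2)*p₁^2*(1/P) := by
  have hr : (0:ℝ) ≤ 1/P := by positivity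
  constructor <;>
    nlinarith [mul_nonneg (mul_nonneg hr hq) (by linarith : (0:ℝ) ≤ (3/2)*p₁ - g),
      mul_nonneg (mul_nonneg hr hq) (by linarith : (0:ℝ) ≤ g + (3/2)*p₁),
      mul_nonneg (mul_nonneg hr (by linarith : (0:ℝ) ≤ p₁ - q)) (by linarith : (0:ℝ) ≤ (3/2)*p₁)]

lemma main_ineq (p₁ Scal P r Q A00 A01 A10 A11 : ℝ)
    (hp₁ : 0 < p₁) (hr : 0 < r) (hPr : P * r = 1)
    (hQ : Q ^ 2 ≤ 9 * p₁ ^ 4)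
    (hA00 : -(4*p₁ + (3/2)*p₁^2*r) ≤ A00 ∧ A00 ≤ 4*p₁ + (3/2)*p₁^2*r)
    (hA01 : -(4*p₁ + (3/2)*p₁^2*r) ≤ A01 ∧ A01 ≤ 4*p₁ + (3/2)*p₁^2*r)
    (hA10 : -(4*p₁ + (3/2)*p₁^2*r) ≤ A10 ∧ A10 ≤ 4*p₁ + (3/2)*p₁^2*r)
    (hA11 : -(4*p₁ + (3/2)*p₁^2*r) ≤ A11 ∧ A11 ≤ 4*p₁ + (3/2)*p₁^2*r) :
    (r^4/4) * (-(Scal*P) + Q)^2 + (r^2/4) * (A00^2 + A01*A10 + (A10*A01 + A11^2)) + 4/3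
      ≤ r^2*Scal^2 + 90*p₁^4*r^4 + (4*p₁ + 24*p₁^2*r)^2*r^2 + 4/3 := by
  set M : ℝ := 4*p₁ + (3/2)*p₁^2*r with hMdef
  have h1 : (-(Scal*P) + Q)^2 ≤ 2*(Scal*P)^2 + 18*p₁^4 := by
    nlinarith [sq_nonneg (Scal*P + Q)]
  have hfirst : (r^4/4) * (-(Scal*P) + Q)^2 ≤ r^2*Scal^2/2 + (9/2)*p₁^4*r^4 := by
    calc (r^4/4) * (-(Scal*P) + Q)^2 ≤ (r^4/4) * (2*(Scal*P)^2 + 18*p₁^4) := by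
          apply mul_le_mul_of_nonneg_left h1 (by positivity)
      _ = (Scal^2*r^2/2)*(P*r)^2 + (9/2)*p₁^4*r^4 := by ring
      _ = r^2*Scal^2/2 + (9/2)*p₁^4*r^4 := by rw [hPr]; ring
  have hS : A00^2 + A01*A10 + (A10*A01 + A11^2) ≤ 4*M^2 := by
    nlinarith [mul_nonneg (by linarith [hA00.2] : (0:ℝ) ≤ M - A00) (by linarith [hA00.1] : (0:ℝ) ≤ M + A00),
      mul_nonneg (by linarith [hA11.2] : (0:ℝ) ≤ M - A11) (by linarith [hA11.1] : (0:ℝ) ≤ M + A11),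
      mul_nonneg (by linarith [hA01.2] : (0:ℝ) ≤ M - A01) (by linarith [hA10.1] : (0:ℝ) ≤ M + A10),
      mul_nonneg (by linarith [hA01.1] : (0:ℝ) ≤ M + A01) (by linarith [hA10.2] : (0:ℝ) ≤ M - A10)]
  have hsecond : (r^2/4) * (A00^2 + A01*A10 + (A10*A01 + A11^2)) ≤ M^2*r^2 := by
    calc (r^2/4) * (A00^2 + A01*A10 + (A10*A01 + A11^2)) ≤ (r^2/4) * (4*M^2) := by
          apply mul_le_mul_of_nonneg_left hS (by positivity)
      _ = M^2*r^2 := by ring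
  have hlast : M^2*r^2 + r^2*Scal^2/2 + (9/2)*p₁^4*r^4
      ≤ r^2*Scal^2 + 90*p₁^4*r^4 + (4*p₁ + 24*p₁^2*r)^2*r^2 := by
    rw [hMdef]
    nlinarith [sq_nonneg (Scal*r), mul_pos (pow_pos hp₁ 3) (pow_pos hr 3),
      mul_pos (pow_pos hp₁ 4) (pow_pos hr 4)]
  linarith

lemma bound_base11 (p₁ p₂ a b : ℝ) (hp₂ : 0 < p₂) (h12 : p₂ ≤ p₁)
    (ha : 0 < a) (hb : 0 < b) (hab : a + b < 3) :
    -(4*p₁) ≤ (2/3)*p₁*a - p₂*(2 - (4/3)*b) ∧ (2/3)*p₁*a - p₂*(2 - (4/3)*b) ≤ 4*p₁ := by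
  have hp₁ : 0 < p₁ := lt_of_lt_of_le hp₂ h12
  constructor <;>
    nlinarith [mul_nonneg hp₁.le ha.le, mul_nonneg hp₁.le (by linarith : (0:ℝ) ≤ 3 - a),
      mul_nonneg hp₂.le hb.le, mul_nonneg hp₂.le (by linarith : (0:ℝ) ≤ 3 - b),
      mul_nonneg (by linarith : (0:ℝ) ≤ p₁ - p₂) hb.le,
      mul_nonneg (by linarith : (0:ℝ) ≤ p₁ - p₂) (by linarith : (0:ℝ) ≤ 3 - b)]

lemma bound_base_off (p₁ p₂ a : ℝ) (hp₂ : 0 < p₂) (h12 : p₂ ≤ p₁) (ha : 0 < a) (ha3 : a < 3) :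
    -(4*p₁) ≤ (2/3)*p₂*a ∧ (2/3)*p₂*a ≤ 4*p₁ := by
  have hp₁ : 0 < p₁ := lt_of_lt_of_le hp₂ h12
  constructor <;>
    nlinarith [mul_nonneg hp₂.le ha.le, mul_nonneg hp₂.le (by linarith : (0:ℝ) ≤ 3 - a)]

/-- If `p₁ ≥ p₂ > 0` and `p(z) > 0` on the closed triangle, then for every `z ∈ P⁰` the squared
norm of the bisectional curvature satisfies
`K(z) ≤ (1/p(z)²)(Scal_Σ² + 90 p₁⁴/p(z)² + (4p₁ + 24p₁²/p(z))²) + 4/3`. -/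
theorem bisectional_curvature_bound
    (p₁ p₂ cS ScalSigma : ℝ) (hp₁₂ : p₁ ≥ p₂) (hp₂ : p₂ > 0)
    (hpos : ∀ z ∈ Tcl, 0 < pT p₁ p₂ cS z) :
    ∀ z ∈ Tin,
      Kfun p₁ p₂ cS (-ScalSigma / 2) z ≤
        (1 / pT p₁ p₂ cS z ^ 2) *
            (ScalSigma ^ 2 + 90 * p₁ ^ 4 / pT p₁ p₂ cS z ^ 2 +
              (4 * p₁ + 24 * p₁ ^ 2 / pT p₁ p₂ cS z) ^ 2) + 4 / 3 := by
  intro z hz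
  obtain ⟨h0, h1, h2⟩ := hz
  have hz' : z ∈ Tin := ⟨h0, h1, h2⟩
  have hP : 0 < pT p₁ p₂ cS z := hpos z ⟨h0.le, h1.le, h2.le⟩
  have hp₁ : 0 < p₁ := lt_of_lt_of_le hp₂ hp₁₂
  have hab : (1 + z 0) + (1 + z 1) < 3 := by simp only [Tin, Set.mem_setOf_eq] at h2 ⊢; linarith
  have e00 : invHess uFS z 0 0 = 2*(1+z 0) - (2/3)*(1+z 0)^2 := by rw [invHess_uFS hz']; simp
  have e01 : invHess uFS z 0 1 = -(2/3)*(1+z 0)*(1+z 1) := by rw [invHess_uFS hz']; simp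
  have e10 : invHess uFS z 1 0 = -(2/3)*(1+z 0)*(1+z 1) := by rw [invHess_uFS hz']; simp
  have e11 : invHess uFS z 1 1 = 2*(1+z 1) - (2/3)*(1+z 1)^2 := by rw [invHess_uFS hz']; simp
  have hA00 : Amat p₁ p₂ cS 0 0 z = -p₁*(2 - (4/3)*(1+z 0)) + (2/3)*p₂*(1+z 1)
      + (1/pT p₁ p₂ cS z)*(p₁*(2*(1+z 0)-(2/3)*(1+z 0)^2) + p₂*(-((2/3)*(1+z 0)*(1+z 1))))*p₁ := by
    unfold Amat
    rw [pder_invHess 0 0 0 hz', pder_invHess 1 0 0 hz', e00, e10]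
    simp only [Matrix.cons_val_zero, Matrix.cons_val_one, Matrix.head_cons]
    ring
  have hA01 : Amat p₁ p₂ cS 0 1 z = (2/3)*p₂*(1+z 0)
      + (1/pT p₁ p₂ cS z)*(p₁*(2*(1+z 0)-(2/3)*(1+z 0)^2) + p₂*(-((2/3)*(1+z 0)*(1+z 1))))*p₂ := by
    unfold Amat
    rw [pder_invHess 0 0 1 hz', pder_invHess 1 0 1 hz', e00, e10]
    simp only [Matrix.cons_val_zero, Matrix.cons_val_one, Matrix.head_cons]
    ring
  have hA10 : Amat p₁ p₂ cS 1 0 z = (2/3)*p₁*(1+z 1)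
      + (1/pT p₁ p₂ cS z)*(p₁*(-((2/3)*(1+z 0)*(1+z 1))) + p₂*(2*(1+z 1)-(2/3)*(1+z 1)^2))*p₁ := by
    unfold Amat
    rw [pder_invHess 0 1 0 hz', pder_invHess 1 1 0 hz', e01, e11]
    simp only [Matrix.cons_val_zero, Matrix.cons_val_one, Matrix.head_cons]
    ring
  have hA11 : Amat p₁ p₂ cS 1 1 z = (2/3)*p₁*(1+z 0) - p₂*(2 - (4/3)*(1+z 1))
      + (1/pT p₁ p₂ cS z)*(p₁*(-((2/3)*(1+z 0)*(1+z 1))) + p₂*(2*(1+z 1)-(2/3)*(1+z 1)^2))*p₂ := by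
    unfold Amat
    rw [pder_invHess 0 1 1 hz', pder_invHess 1 1 1 hz', e01, e11]
    simp only [Matrix.cons_val_zero, Matrix.cons_val_one, Matrix.head_cons]
    ring
  have hQ := bound_Q p₁ p₂ (1+z 0) (1+z 1) hp₂ hp₁₂ h0 h1 hab
  have hG0 := bound_G0 p₁ p₂ (1+z 0) (1+z 1) hp₂ hp₁₂ h0 h1 hab
  have hG1 := bound_G1 p₁ p₂ (1+z 0) (1+z 1) hp₂ hp₁₂ h0 h1 hab
  have hb00 := bound_base00 p₁ p₂ (1+z 0) (1+z 1) hp₂ hp₁₂ h0 h1 hab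
  have hb11 := bound_base11 p₁ p₂ (1+z 0) (1+z 1) hp₂ hp₁₂ h0 h1 hab
  have hb01 := bound_base_off p₁ p₂ (1+z 0) hp₂ hp₁₂ h0 (by linarith)
  have hb10' : -(4*p₁) ≤ (2/3)*p₁*(1+z 1) ∧ (2/3)*p₁*(1+z 1) ≤ 4*p₁ :=
    bound_base_off p₁ p₁ (1+z 1) hp₁ le_rfl h1 (by linarith)
  have hbA00 := bound_A p₁ p₁ (-p₁*(2 - (4/3)*(1+z 0)) + (2/3)*p₂*(1+z 1))
      (p₁*(2*(1+z 0)-(2/3)*(1+z 0)^2) + p₂*(-((2/3)*(1+z 0)*(1+z 1)))) (pT p₁ p₂ cS z)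
      hp₁ hp₁.le le_rfl hP hb00.1 hb00.2 hG0.1 hG0.2
  have hbA01 := bound_A p₁ p₂ ((2/3)*p₂*(1+z 0))
      (p₁*(2*(1+z 0)-(2/3)*(1+z 0)^2) + p₂*(-((2/3)*(1+z 0)*(1+z 1)))) (pT p₁ p₂ cS z)
      hp₁ hp₂.le hp₁₂ hP hb01.1 hb01.2 hG0.1 hG0.2
  have hbA10 := bound_A p₁ p₁ ((2/3)*p₁*(1+z 1))
      (p₁*(-((2/3)*(1+z 0)*(1+z 1))) + p₂*(2*(1+z 1)-(2/3)*(1+z 1)^2)) (pT p₁ p₂ cS z)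
      hp₁ hp₁.le le_rfl hP hb10'.1 hb10'.2 hG1.1 hG1.2
  have hbA11 := bound_A p₁ p₂ ((2/3)*p₁*(1+z 0) - p₂*(2 - (4/3)*(1+z 1)))
      (p₁*(-((2/3)*(1+z 0)*(1+z 1))) + p₂*(2*(1+z 1)-(2/3)*(1+z 1)^2)) (pT p₁ p₂ cS z)
      hp₁ hp₂.le hp₁₂ hP hb11.1 hb11.2 hG1.1 hG1.2
  refine le_trans (le_of_eq ?_) (le_trans
    (main_ineq p₁ ScalSigma (pT p₁ p₂ cS z) (1/pT p₁ p₂ cS z)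
      (p₁^2*(2*(1+z 0)-(2/3)*(1+z 0)^2) + 2*p₁*p₂*(-((2/3)*(1+z 0)*(1+z 1)))
        + p₂^2*(2*(1+z 1)-(2/3)*(1+z 1)^2))
      (-p₁*(2 - (4/3)*(1+z 0)) + (2/3)*p₂*(1+z 1)
        + (1/pT p₁ p₂ cS z)*(p₁*(2*(1+z 0)-(2/3)*(1+z 0)^2) + p₂*(-((2/3)*(1+z 0)*(1+z 1))))*p₁)
      ((2/3)*p₂*(1+z 0)
        + (1/pT p₁ p₂ cS z)*(p₁*(2*(1+z 0)-(2/3)*(1+z 0)^2) + p₂*(-((2/3)*(1+z 0)*(1+z 1))))*p₂)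
      ((2/3)*p₁*(1+z 1)
        + (1/pT p₁ p₂ cS z)*(p₁*(-((2/3)*(1+z 0)*(1+z 1))) + p₂*(2*(1+z 1)-(2/3)*(1+z 1)^2))*p₁)
      ((2/3)*p₁*(1+z 0) - p₂*(2 - (4/3)*(1+z 1))
        + (1/pT p₁ p₂ cS z)*(p₁*(-((2/3)*(1+z 0)*(1+z 1))) + p₂*(2*(1+z 1)-(2/3)*(1+z 1)^2))*p₂)
      hp₁ (by positivity) (mul_one_div_cancel hP.ne') hQ hbA00 hbA01 hbA10 hbA11)
    (le_of_eq ?_))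
  · simp only [Kfun, Fin.sum_univ_two]
    rw [hA00, hA01, hA10, hA11, e00, e01, e11]
    ring
  · ring
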